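/- Let K be a compact Hausdorff space and H ⊆ C(K, K_C) such that Conv(H) separates the points of K. Given x_0 ∈ K and an open neighborhood V of x_0, there exists an open neighborhood U of x_0 with U ⊆ V such that for all 0 < δ < 1/2 there is φ ∈ Conv(H) with φ(t) > 1 − δ for all t ∈ U and φ(t) < δ for all t ∉ V. -/

import Mathlib

/-- The space `K_C` of nonempty compact intervals of `ℝ`, given by endpoints. -/
structure KC where
  lo : ℝ
  hi : ℝ
  isLe : lo ≤ hi

namespace KC

@[ext] theorem ext' {A B : KC} (h1 : A.lo = B.lo) (h2 : A.hi = B.hi) : A = B := by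
  cases A; cases B; simp_all

/-- Minkowski addition. -/
instance : Add KC := ⟨fun A B => ⟨A.lo + B.lo, A.hi + B.hi, add_le_add A.isLe B.isLe⟩⟩

instance : Zero KC := ⟨⟨0, 0, le_refl 0⟩⟩

/-- Scalar multiplication `λ·[a,b] = {λx : x ∈ [a,b]}`. -/
noncomputable instance : SMul ℝ KC :=
  ⟨fun c A => ⟨min (c * A.lo) (c * A.hi), max (c * A.lo) (c * A.hi), min_le_max⟩⟩

noncomputable instance : AddCommMonoid KC where
  add_assoc A B C := by ext <;> exact add_assoc _ _ _
  zero_add A := by ext <;> exact zero_add _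
  add_zero A := by ext <;> exact add_zero _
  add_comm A B := by ext <;> exact add_comm _ _
  nsmul := nsmulRec

/-- The Hausdorff metric on `K_C`: `d_H([a,b],[c,d]) = max {|a-c|, |b-d|}`. -/
noncomputable instance : MetricSpace KC where
  dist A B := max |A.lo - B.lo| |A.hi - B.hi|
  dist_self A := by simp
  dist_comm A B := by simp [abs_sub_comm]
  dist_triangle A B C := by
    apply max_le
    · calc |A.lo - C.lo| ≤ |A.lo - B.lo| + |B.lo - C.lo| := abs_sub_le _ _ _
        _ ≤ _ := add_le_add (le_max_left _ _) (le_max_left _ _)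
    · calc |A.hi - C.hi| ≤ |A.hi - B.hi| + |B.hi - C.hi| := abs_sub_le _ _ _
        _ ≤ _ := add_le_add (le_max_right _ _) (le_max_right _ _)
  eq_of_dist_eq_zero := by
    intro A B h
    have h1 : |A.lo - B.lo| = 0 :=
      le_antisymm (le_of_le_of_eq (le_max_left _ _) h) (abs_nonneg _)
    have h2 : |A.hi - B.hi| = 0 :=
      le_antisymm (le_of_le_of_eq (le_max_right _ _) h) (abs_nonneg _)
    ext
    · linarith [abs_eq_zero.mp h1]
    · linarith [abs_eq_zero.mp h2]

/-- The generalized Hukuhara difference. -/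
noncomputable def gH (A B : KC) : KC :=
  ⟨min (A.lo - B.lo) (A.hi - B.hi), max (A.lo - B.lo) (A.hi - B.hi), min_le_max⟩

/-- The length (diameter) of an interval. -/
def len (A : KC) : ℝ := A.hi - A.lo

end KC

/-- `Conv H`: continuous `[0,1]`-valued functions `φ` with `φf + (1-φ)g ∈ H` for all `f,g ∈ H`. -/
def Conv {K : Type*} [TopologicalSpace K] (H : Set C(K, KC)) : Set C(K, ℝ) :=
  {φ | (∀ k, φ k ∈ Set.Icc (0:ℝ) 1) ∧
    ∀ f ∈ H, ∀ g ∈ H, ∃ h ∈ H, ∀ k, h k = φ k • f k + (1 - φ k) • g k}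

section Aux

lemma KC.combo_lo {c : ℝ} (hc0 : 0 ≤ c) (hc1 : c ≤ 1) (A B : KC) :
    (c • A + (1 - c) • B).lo = c * A.lo + (1 - c) * B.lo := by
  show min (c * A.lo) (c * A.hi) + min ((1 - c) * B.lo) ((1 - c) * B.hi)
      = c * A.lo + (1 - c) * B.lo
  rw [min_eq_left (mul_le_mul_of_nonneg_left A.isLe hc0),
    min_eq_left (mul_le_mul_of_nonneg_left B.isLe (by linarith))]

lemma KC.combo_hi {c : ℝ} (hc0 : 0 ≤ c) (hc1 : c ≤ 1) (A B : KC) :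
    (c • A + (1 - c) • B).hi = c * A.hi + (1 - c) * B.hi := by
  show max (c * A.lo) (c * A.hi) + max ((1 - c) * B.lo) ((1 - c) * B.hi)
      = c * A.hi + (1 - c) * B.hi
  rw [max_eq_right (mul_le_mul_of_nonneg_left A.isLe hc0),
    max_eq_right (mul_le_mul_of_nonneg_left B.isLe (by linarith))]

variable {K : Type*} [TopologicalSpace K] {H : Set C(K, KC)}

lemma conv_nonneg {φ : C(K, ℝ)} (hφ : φ ∈ Conv H) (k : K) : 0 ≤ φ k := (hφ.1 k).1

lemma conv_le_one {φ : C(K, ℝ)} (hφ : φ ∈ Conv H) (k : K) : φ k ≤ 1 := (hφ.1 k).2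

lemma conv_one_mem : (1 : C(K, ℝ)) ∈ Conv H := by
  refine ⟨fun k => by simp, fun f hf g hg => ⟨f, hf, fun k => ?_⟩⟩
  ext
  · rw [show ((1:C(K,ℝ)) k) = (1:ℝ) from rfl, KC.combo_lo zero_le_one le_rfl]; ring
  · rw [show ((1:C(K,ℝ)) k) = (1:ℝ) from rfl, KC.combo_hi zero_le_one le_rfl]; ring

lemma conv_compl_mem {φ : C(K, ℝ)} (hφ : φ ∈ Conv H) : 1 - φ ∈ Conv H := by
  refine ⟨fun k => ?_, fun f hf g hg => ?_⟩
  · have := hφ.1 k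
    simp only [ContinuousMap.sub_apply, ContinuousMap.one_apply, Set.mem_Icc] at *
    constructor <;> linarith [this.1, this.2]
  · obtain ⟨h, hh, hhk⟩ := hφ.2 g hg f hf
    refine ⟨h, hh, fun k => ?_⟩
    have h0 := conv_nonneg hφ k
    have h1 := conv_le_one hφ k
    have e : ((1 - φ) k : ℝ) = 1 - φ k := rfl
    ext
    · rw [hhk k, e, KC.combo_lo (c := 1 - φ k) (by linarith) (by linarith),
        KC.combo_lo h0 h1]; ring
    · rw [hhk k, e, KC.combo_hi (c := 1 - φ k) (by linarith) (by linarith),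
        KC.combo_hi h0 h1]; ring

lemma conv_mul_mem {φ ψ : C(K, ℝ)} (hφ : φ ∈ Conv H) (hψ : ψ ∈ Conv H) :
    φ * ψ ∈ Conv H := by
  refine ⟨fun k => ?_, fun f hf g hg => ?_⟩
  · exact ⟨mul_nonneg (conv_nonneg hφ k) (conv_nonneg hψ k),
      mul_le_one₀ (conv_le_one hφ k) (conv_nonneg hψ k) (conv_le_one hψ k)⟩
  · obtain ⟨h₁, hh₁, hh₁k⟩ := hψ.2 f hf g hg
    obtain ⟨h, hh, hhk⟩ := hφ.2 h₁ hh₁ g hg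
    refine ⟨h, hh, fun k => ?_⟩
    have p0 := conv_nonneg hφ k; have p1 := conv_le_one hφ k
    have q0 := conv_nonneg hψ k; have q1 := conv_le_one hψ k
    have e : ((φ * ψ) k : ℝ) = φ k * ψ k := rfl
    have elo : (h₁ k).lo = ψ k * (f k).lo + (1 - ψ k) * (g k).lo := by
      rw [hh₁k k, KC.combo_lo q0 q1]
    have ehi : (h₁ k).hi = ψ k * (f k).hi + (1 - ψ k) * (g k).hi := by
      rw [hh₁k k, KC.combo_hi q0 q1]
    ext
    · rw [hhk k, e, KC.combo_lo (mul_nonneg p0 q0) (mul_le_one₀ p1 q0 q1),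
        KC.combo_lo p0 p1, elo]; ring
    · rw [hhk k, e, KC.combo_hi (mul_nonneg p0 q0) (mul_le_one₀ p1 q0 q1),
        KC.combo_hi p0 p1, ehi]; ring

lemma conv_pow_mem {φ : C(K, ℝ)} (hφ : φ ∈ Conv H) (n : ℕ) : φ ^ n ∈ Conv H := by
  induction n with
  | zero => simpa using (conv_one_mem (H := H))
  | succ n ih => rw [pow_succ]; exact conv_mul_mem ih hφ

lemma conv_prod_mem {ι : Type*} (s : Finset ι) (f : ι → C(K, ℝ))
    (hf : ∀ i ∈ s, f i ∈ Conv H) : ∏ i ∈ s, f i ∈ Conv H := by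
  classical
  refine Finset.prod_induction f (· ∈ Conv H) (fun _ _ => conv_mul_mem) conv_one_mem hf

/-- Numeric key: choice of exponents. -/
lemma exists_pow_bounds {a b ε : ℝ} (ha : 0 ≤ a) (hab : a < b) (hb : b ≤ 1)
    (hε : 0 < ε) : ∃ n m : ℕ, (m : ℝ) * a ^ n < ε ∧ 1 / ε < (m : ℝ) * b ^ n := by
  obtain ⟨θ, hθ0, haθ, hθb⟩ : ∃ θ : ℝ, 0 < θ ∧ a < θ ∧ θ < b :=
    ⟨(a + b) / 2, by linarith, by linarith, by linarith⟩
  have h1 : Filter.Tendsto (fun n : ℕ => (a / θ) ^ n + a ^ n) Filter.atTop (nhds 0) := by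
    have t1 : Filter.Tendsto (fun n : ℕ => (a / θ) ^ n) Filter.atTop (nhds 0) :=
      tendsto_pow_atTop_nhds_zero_of_lt_one (div_nonneg ha hθ0.le)
        ((div_lt_one hθ0).2 haθ)
    have t2 : Filter.Tendsto (fun n : ℕ => a ^ n) Filter.atTop (nhds 0) :=
      tendsto_pow_atTop_nhds_zero_of_lt_one ha (lt_of_lt_of_le hab hb)
    simpa using t1.add t2
  have h2 : Filter.Tendsto (fun n : ℕ => (b / θ) ^ n) Filter.atTop Filter.atTop :=
    tendsto_pow_atTop_atTop_of_one_lt ((one_lt_div hθ0).2 hθb)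
  have h3 := (h1.eventually (gt_mem_nhds hε)).and (h2.eventually_gt_atTop (1 / ε))
  obtain ⟨n, hn1, hn2⟩ := h3.exists
  refine ⟨n, ⌈(1 / θ) ^ n⌉₊, ?_, ?_⟩
  · have hceil : (⌈(1 / θ) ^ n⌉₊ : ℝ) < (1 / θ) ^ n + 1 :=
      Nat.ceil_lt_add_one (pow_nonneg (one_div_nonneg.2 hθ0.le) n)
    have han : 0 ≤ a ^ n := pow_nonneg ha n
    have : (⌈(1 / θ) ^ n⌉₊ : ℝ) * a ^ n ≤ ((1 / θ) ^ n + 1) * a ^ n :=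
      mul_le_mul_of_nonneg_right hceil.le han
    calc (⌈(1 / θ) ^ n⌉₊ : ℝ) * a ^ n ≤ ((1 / θ) ^ n + 1) * a ^ n := this
      _ = (a / θ) ^ n + a ^ n := by
          rw [add_mul, one_mul, div_pow, div_pow, one_pow, div_mul_eq_mul_div, one_mul]
      _ < ε := hn1
  · have hceil : (1 / θ) ^ n ≤ (⌈(1 / θ) ^ n⌉₊ : ℝ) := Nat.le_ceil _
    have hbn : 0 ≤ b ^ n := pow_nonneg (by linarith) n
    calc 1 / ε < (b / θ) ^ n := hn2
      _ = (1 / θ) ^ n * b ^ n := by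
          rw [div_pow, div_pow, one_pow, div_mul_eq_mul_div, one_mul]
      _ ≤ (⌈(1 / θ) ^ n⌉₊ : ℝ) * b ^ n := mul_le_mul_of_nonneg_right hceil hbn

/-- The amplification lemma. -/
lemma conv_amplify {φ : C(K, ℝ)} (hφ : φ ∈ Conv H) {a b ε : ℝ}
    (ha : 0 ≤ a) (hab : a < b) (hb : b ≤ 1) (hε : 0 < ε) :
    ∃ ψ ∈ Conv H, (∀ x, φ x ≤ a → ψ x < ε) ∧ (∀ x, b ≤ φ x → 1 - ε < ψ x) := by
  obtain ⟨n, m, hm1, hm2⟩ := exists_pow_bounds ha hab hb hε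
  refine ⟨1 - (1 - φ ^ n) ^ m,
    conv_compl_mem (conv_pow_mem (conv_compl_mem (conv_pow_mem hφ n)) m), ?_, ?_⟩
  · intro x hx
    have h0 := conv_nonneg hφ x
    have h1 := conv_le_one hφ x
    have hxn1 : φ x ^ n ≤ 1 := pow_le_one₀ h0 h1
    have hxn0 : 0 ≤ φ x ^ n := by positivity
    have hBer : 1 - (m : ℝ) * φ x ^ n ≤ (1 - φ x ^ n) ^ m := by
      have h := one_add_mul_le_pow (a := -(φ x ^ n)) (by linarith) m
      rw [show (1:ℝ) + -(φ x ^ n) = 1 - φ x ^ n by ring] at h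
      linarith
    have hle : φ x ^ n ≤ a ^ n := pow_le_pow_left₀ h0 hx n
    have heval : ((1 - (1 - φ ^ n) ^ m : C(K, ℝ)) x : ℝ)
        = 1 - (1 - φ x ^ n) ^ m := by simp
    rw [heval]
    have : (m : ℝ) * φ x ^ n ≤ (m : ℝ) * a ^ n :=
      mul_le_mul_of_nonneg_left hle (Nat.cast_nonneg m)
    linarith
  · intro x hx
    have h0 := conv_nonneg hφ x
    have h1 := conv_le_one hφ x
    have hb0 : 0 < b := by linarith
    have hbn0 : 0 < b ^ n := by positivity
    have hbn1 : b ^ n ≤ 1 := pow_le_one₀ hb0.le hb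
    have hxn1 : φ x ^ n ≤ 1 := pow_le_one₀ h0 h1
    have hle : b ^ n ≤ φ x ^ n := pow_le_pow_left₀ hb0.le hx n
    have step1 : (1 - φ x ^ n) ^ m ≤ (1 - b ^ n) ^ m :=
      pow_le_pow_left₀ (by linarith) (by linarith) m
    have hBer : 1 + (m : ℝ) * b ^ n ≤ (1 + b ^ n) ^ m :=
      one_add_mul_le_pow (by linarith) m
    have hmix : (1 - b ^ n) ^ m * (1 + b ^ n) ^ m ≤ 1 := by
      rw [← mul_pow]
      have : (1 - b ^ n) * (1 + b ^ n) = 1 - (b ^ n) ^ 2 := by ring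
      rw [this]
      exact pow_le_one₀ (by nlinarith) (by nlinarith)
    have step2 : (1 - b ^ n) ^ m * (1 + (m : ℝ) * b ^ n) ≤ 1 := by
      have hnn : (0:ℝ) ≤ (1 - b ^ n) ^ m := pow_nonneg (by linarith) m
      calc (1 - b ^ n) ^ m * (1 + (m : ℝ) * b ^ n)
          ≤ (1 - b ^ n) ^ m * (1 + b ^ n) ^ m := mul_le_mul_of_nonneg_left hBer hnn
        _ ≤ 1 := hmix
    have hmb : 1 / ε < (m : ℝ) * b ^ n := hm2
    have step3 : (1 - b ^ n) ^ m < ε := by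
      have hpos : (0:ℝ) < 1 + (m : ℝ) * b ^ n := by positivity
      rw [div_lt_iff₀ hε] at hmb
      nlinarith [pow_nonneg (show (0:ℝ) ≤ 1 - b ^ n by linarith) m]
    have heval : ((1 - (1 - φ ^ n) ^ m : C(K, ℝ)) x : ℝ)
        = 1 - (1 - φ x ^ n) ^ m := by simp
    rw [heval]
    linarith

end Aux

lemma cm_prod_apply {K : Type*} [TopologicalSpace K] {ι : Type*} (s : Finset ι)
    (f : ι → C(K, ℝ)) (x : K) : (∏ i ∈ s, f i) x = ∏ i ∈ s, f i x := by
  classical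
  induction s using Finset.induction_on with
  | empty => simp
  | insert _ _ h ih => rw [Finset.prod_insert h, Finset.prod_insert h, ContinuousMap.mul_apply, ih]

theorem conv_selection_lemma {K : Type*} [TopologicalSpace K] [CompactSpace K] [T2Space K]
    (H : Set C(K, KC))
    (hsep : ∀ s t : K, s ≠ t → ∃ φ ∈ Conv H, φ s ≠ φ t)
    (x₀ : K) (V : Set K) (hV : IsOpen V) (hx₀ : x₀ ∈ V) :
    ∃ U : Set K, IsOpen U ∧ x₀ ∈ U ∧ U ⊆ V ∧
      ∀ δ : ℝ, 0 < δ → δ < 1/2 →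
        ∃ φ ∈ Conv H, (∀ t ∈ U, 1 - δ < φ t) ∧ (∀ t ∉ V, φ t < δ) := by
  classical
  have main : ∀ s t : K, ∀ φ : C(K, ℝ), φ ∈ Conv H → φ s < φ t →
      ∃ h ∈ Conv H, h s < 1/4 ∧ 3/4 < h t := by
    intro s t φ hφ hlt
    obtain ⟨ψ, hψ, h1, h2⟩ := conv_amplify hφ (conv_nonneg hφ s) hlt
      (conv_le_one hφ t) (show (0:ℝ) < 1/4 by norm_num)
    refine ⟨ψ, hψ, h1 s le_rfl, by linarith [h2 t le_rfl]⟩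
  have key : ∀ t : K, t ∉ V → ∃ h ∈ Conv H, h x₀ < 1/4 ∧ 3/4 < h t := by
    intro t ht
    have hne : x₀ ≠ t := fun h => ht (h ▸ hx₀)
    obtain ⟨φ, hφ, hφne⟩ := hsep x₀ t hne
    rcases lt_or_gt_of_ne hφne with h | h
    · exact main x₀ t φ hφ h
    · have hφ' := conv_compl_mem hφ
      have h' : (1 - φ) x₀ < (1 - φ) t := by
        simp only [ContinuousMap.sub_apply, ContinuousMap.one_apply]; linarith
      exact main x₀ t (1 - φ) hφ' h'
  set ι := {ψ : C(K, ℝ) // ψ ∈ Conv H ∧ ψ x₀ < 1/4} with hι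
  have hCcomp : IsCompact Vᶜ := hV.isClosed_compl.isCompact
  have hcover : Vᶜ ⊆ ⋃ i : ι, {x | 3/4 < i.1 x} := by
    intro t ht
    obtain ⟨h, hh, h1, h2⟩ := key t ht
    exact Set.mem_iUnion.2 ⟨⟨h, hh, h1⟩, h2⟩
  obtain ⟨s, hs⟩ := hCcomp.elim_finite_subcover (fun i : ι => {x | 3/4 < i.1 x})
    (fun i => isOpen_lt continuous_const (map_continuous i.1)) hcover
  refine ⟨V ∩ ⋂ i ∈ s, {x | i.1 x < 1/4},
    hV.inter (isOpen_biInter_finset fun i _ => isOpen_lt (map_continuous i.1) continuous_const),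
    ⟨hx₀, Set.mem_iInter₂.2 fun i _ => i.2.2⟩, Set.inter_subset_left, ?_⟩
  intro δ hδ0 hδhalf
  set N := s.card with hN
  set δ' := δ / (N + 1) with hδ'
  have hN1 : (0:ℝ) < (N : ℝ) + 1 := by positivity
  have hδ'0 : 0 < δ' := by positivity
  have hsum : ((N : ℝ) + 1) * δ' = δ := by
    rw [hδ']; field_simp
  have hδ'δ : δ' ≤ δ := by nlinarith
  have hNδ' : (N : ℝ) * δ' < δ := by nlinarith
  have choice : ∀ i : ι, ∃ g ∈ Conv H,
      (∀ x, i.1 x < 1/4 → 1 - δ' < g x) ∧ (∀ x, 3/4 < i.1 x → g x < δ') := by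
    intro i
    obtain ⟨g, hg, hg1, hg2⟩ := conv_amplify (conv_compl_mem i.2.1)
      (a := 1/4) (b := 3/4) (by norm_num) (by norm_num) (by norm_num) hδ'0
    refine ⟨g, hg, fun x hx => ?_, fun x hx => ?_⟩
    · refine hg2 x ?_
      simp only [ContinuousMap.sub_apply, ContinuousMap.one_apply]; linarith
    · refine hg1 x ?_
      simp only [ContinuousMap.sub_apply, ContinuousMap.one_apply]; linarith
  choose g hg hg1 hg2 using choice
  refine ⟨∏ i ∈ s, g i, conv_prod_mem s g (fun i _ => hg i), ?_, ?_⟩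
  · intro t ht
    rw [cm_prod_apply]
    have hlb : ∀ i ∈ s, 1 - δ' ≤ g i t := by
      intro i hi
      exact le_of_lt (hg1 i t (Set.mem_iInter₂.1 ht.2 i hi))
    have hprod : (1 - δ') ^ N ≤ ∏ i ∈ s, g i t := by
      rw [hN, ← Finset.prod_const]
      exact Finset.prod_le_prod (fun i _ => by linarith) hlb
    have hBer : 1 - (N : ℝ) * δ' ≤ (1 - δ') ^ N := by
      have h := one_add_mul_le_pow (a := -δ') (by linarith) N
      rw [show (1:ℝ) + -δ' = 1 - δ' by ring] at h
      linarith
    linarith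
  · intro t ht
    rw [cm_prod_apply]
    obtain ⟨i, hi, hit⟩ := Set.mem_iUnion₂.1 (hs ht)
    have hsmall : g i t < δ' := hg2 i t hit
    have hrest : ∏ j ∈ s.erase i, g j t ≤ 1 :=
      Finset.prod_le_one (fun j _ => conv_nonneg (hg j) t) (fun j _ => conv_le_one (hg j) t)
    have hsplit : ∏ j ∈ s, g j t = g i t * ∏ j ∈ s.erase i, g j t :=
      (Finset.mul_prod_erase s (fun j => g j t) hi).symm
    have h0 : 0 ≤ g i t := conv_nonneg (hg i) t
    calc ∏ j ∈ s, g j t = g i t * ∏ j ∈ s.erase i, g j t := hsplit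
      _ ≤ g i t * 1 := mul_le_mul_of_nonneg_left hrest h0
      _ = g i t := mul_one _
      _ < δ' := hsmall
      _ ≤ δ := hδ'δ
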